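/- Let K ≥ 1, let t be a fixed index in {1,…,K}, let γ > 1 and ω ∈ (0,1] be real numbers. For z ∈ ℝ^K define softmax probabilities p_i(z) = exp(z_i)/∑_{j=1}^K exp(z_j), let p_t = p_t(z), and define the total loss L(z) = γ^{ω − p_t(z)} · (−log p_t(z)). Then L is differentiable at every z ∈ ℝ^K, and its gradient equals ∇_z L = Ψ(p_t, γ)·(p(z) − e_t), where the scalar modulation factor is Ψ(p_t, γ) = γ^{ω − p_t}·(1 − p_t · log γ · log p_t) and e_t is the t-th standard basis vector. -/

import Mathlib

set_option maxHeartbeats 1000000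

open Real Finset

/-- The class–confidence aware reweighted cross-entropy loss
`L(z) = γ ^ {ω − p_t(z)}·(−log p_t(z))` over the logits `z` is differentiable
with gradient `∇_z L = Ψ(p_t, γ)·(p(z) − e_t)`. -/
theorem ccar_total_loss_gradient
    (K : ℕ) (hK : 1 ≤ K) (t : Fin K) (γ ω : ℝ) (hγ : 1 < γ)
    (hω : ω ∈ Set.Ioc (0 : ℝ) 1)
    (p : (Fin K → ℝ) → Fin K → ℝ)
    (hp : ∀ w i, p w i = Real.exp (w i) / ∑ j, Real.exp (w j))
    (L : (Fin K → ℝ) → ℝ)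
    (hL : ∀ w, L w = γ ^ (ω - p w t) * (-Real.log (p w t)))
    (Ψ : ℝ → ℝ)
    (hΨ : ∀ q, Ψ q = γ ^ (ω - q) * (1 - q * Real.log γ * Real.log q)) :
    ∀ z : Fin K → ℝ,
      HasFDerivAt L
        (∑ i, (Ψ (p z t) * (p z i - (if i = t then (1 : ℝ) else 0))) •
          (ContinuousLinearMap.proj i : ((Fin K → ℝ) →L[ℝ] ℝ))) z := by
  intro z
  have hγ0 : (0:ℝ) < γ := lt_trans one_pos hγ
  set S : (Fin K → ℝ) → ℝ := fun w => ∑ j, Real.exp (w j) with hSdef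
  haveI : Nonempty (Fin K) := ⟨t⟩
  have hS0 : 0 < S z :=
    Finset.sum_pos (fun j _ => Real.exp_pos _) Finset.univ_nonempty
  -- derivative of S
  have hS' : HasFDerivAt S
      (∑ j, Real.exp (z j) • (ContinuousLinearMap.proj j : ((Fin K → ℝ) →L[ℝ] ℝ))) z := by
    apply HasFDerivAt.fun_sum
    intro j _
    have hproj : HasFDerivAt (fun y : Fin K → ℝ => y j)
        (ContinuousLinearMap.proj j : ((Fin K → ℝ) →L[ℝ] ℝ)) z :=
      (ContinuousLinearMap.proj j : ((Fin K → ℝ) →L[ℝ] ℝ)).hasFDerivAt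
    exact (Real.hasDerivAt_exp (z j)).comp_hasFDerivAt z hproj
  have hE : HasFDerivAt (fun w : Fin K → ℝ => Real.exp (w t))
      (Real.exp (z t) • (ContinuousLinearMap.proj t : ((Fin K → ℝ) →L[ℝ] ℝ))) z := by
    have hproj : HasFDerivAt (fun y : Fin K → ℝ => y t)
        (ContinuousLinearMap.proj t : ((Fin K → ℝ) →L[ℝ] ℝ)) z :=
      (ContinuousLinearMap.proj t : ((Fin K → ℝ) →L[ℝ] ℝ)).hasFDerivAt
    exact (Real.hasDerivAt_exp (z t)).comp_hasFDerivAt z hproj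
  have hInv : HasFDerivAt (fun w => (S w)⁻¹)
      ((-(S z ^ 2)⁻¹) •
        (∑ j, Real.exp (z j) • (ContinuousLinearMap.proj j : ((Fin K → ℝ) →L[ℝ] ℝ)))) z :=
    (hasDerivAt_inv hS0.ne').comp_hasFDerivAt z hS'
  have hpt : HasFDerivAt (fun w => p w t)
      (Real.exp (z t) • ((-(S z ^ 2)⁻¹) •
          (∑ j, Real.exp (z j) • (ContinuousLinearMap.proj j : ((Fin K → ℝ) →L[ℝ] ℝ)))) +
        (S z)⁻¹ • (Real.exp (z t) • (ContinuousLinearMap.proj t : ((Fin K → ℝ) →L[ℝ] ℝ)))) z := by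
    have := hE.mul hInv
    apply this.congr_of_eventuallyEq
    filter_upwards with w
    rw [hp]
    exact (div_eq_mul_inv _ _)
  set pt := p z t with hptdef
  have hpt0 : 0 < pt := by
    rw [hptdef, hp]
    exact div_pos (Real.exp_pos _) hS0
  -- scalar outer function
  have ha : HasDerivAt (fun q : ℝ => γ ^ (ω - q))
      (γ ^ (ω - pt) * Real.log γ * (-1)) pt := by
    have h1 : HasDerivAt (fun q : ℝ => ω - q) (-1) pt := by
      simpa using (hasDerivAt_id pt).const_sub ω
    have h2 := (Real.hasStrictDerivAt_const_rpow hγ0 (ω - pt)).hasDerivAt.comp pt h1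
    simpa [Function.comp_def] using h2
  have hb : HasDerivAt (fun q : ℝ => -Real.log q) (-pt⁻¹) pt :=
    (Real.hasDerivAt_log hpt0.ne').neg
  have hg : HasDerivAt (fun q : ℝ => γ ^ (ω - q) * (-Real.log q))
      (γ ^ (ω - pt) * Real.log γ * (-1) * (-Real.log pt) +
        γ ^ (ω - pt) * (-pt⁻¹)) pt := ha.mul hb
  have hcomp := hg.comp_hasFDerivAt z hpt
  have hLfun : L = (fun q : ℝ => γ ^ (ω - q) * (-Real.log q)) ∘ (fun w => p w t) := by
    funext w; exact hL w
  rw [hLfun]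
  refine hcomp.congr_fderiv (Eq.symm ?_)
  -- equality of continuous linear maps
  refine ContinuousLinearMap.ext fun x => ?_
  simp only [ContinuousLinearMap.coe_sum', Finset.sum_apply,
    ContinuousLinearMap.coe_smul', Pi.smul_apply, ContinuousLinearMap.proj_apply,
    ContinuousLinearMap.add_apply, ContinuousLinearMap.coe_add',
    smul_eq_mul, Pi.add_apply, Pi.neg_apply, ContinuousLinearMap.coe_neg']
  have hsplit : ∀ i : Fin K,
      Ψ pt * (p z i - if i = t then (1:ℝ) else 0) * x i
        = Ψ pt * p z i * x i - (if i = t then Ψ pt * x i else 0) := by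
    intro i
    by_cases h : i = t <;> simp [h] <;> ring
  rw [Finset.sum_congr rfl fun i _ => hsplit i, Finset.sum_sub_distrib,
    Finset.sum_ite_eq' Finset.univ t (fun i => Ψ pt * x i)]
  simp only [Finset.mem_univ, if_true]
  have hpti : ∀ i, p z i = Real.exp (z i) / S z := fun i => hp z i
  have hΨpt : Ψ pt = γ ^ (ω - pt) * (1 - pt * Real.log γ * Real.log pt) := hΨ pt
  have h1 : ∑ i, Ψ pt * p z i * x i = Ψ pt / S z * ∑ i, Real.exp (z i) * x i := by
    rw [Finset.mul_sum]
    refine Finset.sum_congr rfl fun i _ => ?_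
    rw [hpti i]; ring
  rw [h1, hΨpt]
  have hptS : pt = Real.exp (z t) / S z := hpti t
  rw [hptS]
  field_simp
  ring
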